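/- Let M be a map with flag set F and generators s0, s1, s2, and let r0, r1, r2 be the truncation generators on F × {0,1,2}. Then each of r0, r1, r2 is a fixed-point-free involution, r0∘r2 = r2∘r0 and this composite is also a fixed-point-free involution, and (r1∘r2)^3 is the identity permutation of F × {0,1,2}. -/
import Mathlib


/-- the truncation generators r0, r1, r2 are fixed-point-free involutions,
r0∘r2 = r2∘r0 is also a fixed-point-free involution, and (r1∘r2)^3 = 1. -/
theorem truncation_generators_relations
    {F : Type*} [Fintype F] [Nonempty F]
    (s0 s1 s2 : Equiv.Perm F)
    (hs0i : s0 * s0 = 1) (hs0f : ∀ x, s0 x ≠ x)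
    (hs1i : s1 * s1 = 1) (hs1f : ∀ x, s1 x ≠ x)
    (hs2i : s2 * s2 = 1) (hs2f : ∀ x, s2 x ≠ x)
    (hcomm : s0 * s2 = s2 * s0)
    (hs02i : (s0 * s2) * (s0 * s2) = 1) (hs02f : ∀ x, (s0 * s2) x ≠ x)
    (htrans : ∀ x y : F, ∃ g ∈ Subgroup.closure ({s0, s1, s2} : Set (Equiv.Perm F)), g x = y)
    (r0 r1 r2 : Equiv.Perm (F × Fin 3))
    (hr0 : ∀ Φ : F, r0 (Φ, 0) = (s1 Φ, 0) ∧ r0 (Φ, 1) = (s0 Φ, 1) ∧ r0 (Φ, 2) = (s1 Φ, 2))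
    (hr1 : ∀ Φ : F, r1 (Φ, 0) = (s2 Φ, 0) ∧ r1 (Φ, 1) = (Φ, 2) ∧ r1 (Φ, 2) = (Φ, 1))
    (hr2 : ∀ Φ : F, r2 (Φ, 0) = (Φ, 2) ∧ r2 (Φ, 1) = (s2 Φ, 1) ∧ r2 (Φ, 2) = (Φ, 0)) :
    ((∀ x, r0 x ≠ x) ∧ r0 * r0 = 1) ∧
    ((∀ x, r1 x ≠ x) ∧ r1 * r1 = 1) ∧
    ((∀ x, r2 x ≠ x) ∧ r2 * r2 = 1) ∧
    r0 * r2 = r2 * r0 ∧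
    ((∀ x, (r0 * r2) x ≠ x) ∧ (r0 * r2) * (r0 * r2) = 1) ∧
    (r1 * r2) ^ 3 = 1 := by
  have h0 : ∀ x, s0 (s0 x) = x := fun x => by
    have := DFunLike.congr_fun hs0i x; simpa [Equiv.Perm.mul_apply] using this
  have h1 : ∀ x, s1 (s1 x) = x := fun x => by
    have := DFunLike.congr_fun hs1i x; simpa [Equiv.Perm.mul_apply] using this
  have h2 : ∀ x, s2 (s2 x) = x := fun x => by
    have := DFunLike.congr_fun hs2i x; simpa [Equiv.Perm.mul_apply] using this
  have hc : ∀ x, s0 (s2 x) = s2 (s0 x) := fun x => by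
    have := DFunLike.congr_fun hcomm x; simpa [Equiv.Perm.mul_apply] using this
  have h02 : ∀ x, s0 (s2 x) ≠ x := fun x => by
    have := hs02f x; simpa [Equiv.Perm.mul_apply] using this
  have a00 : ∀ Φ, r0 (Φ,(0:Fin 3)) = (s1 Φ,0) := fun Φ => (hr0 Φ).1
  have a01 : ∀ Φ, r0 (Φ,(1:Fin 3)) = (s0 Φ,1) := fun Φ => (hr0 Φ).2.1
  have a02 : ∀ Φ, r0 (Φ,(2:Fin 3)) = (s1 Φ,2) := fun Φ => (hr0 Φ).2.2
  have a10 : ∀ Φ, r1 (Φ,(0:Fin 3)) = (s2 Φ,0) := fun Φ => (hr1 Φ).1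
  have a11 : ∀ Φ, r1 (Φ,(1:Fin 3)) = (Φ,2) := fun Φ => (hr1 Φ).2.1
  have a12 : ∀ Φ, r1 (Φ,(2:Fin 3)) = (Φ,1) := fun Φ => (hr1 Φ).2.2
  have a20 : ∀ Φ, r2 (Φ,(0:Fin 3)) = (Φ,2) := fun Φ => (hr2 Φ).1
  have a21 : ∀ Φ, r2 (Φ,(1:Fin 3)) = (s2 Φ,1) := fun Φ => (hr2 Φ).2.1
  have a22 : ∀ Φ, r2 (Φ,(2:Fin 3)) = (Φ,0) := fun Φ => (hr2 Φ).2.2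
  refine ⟨⟨?_, ?_⟩, ⟨?_, ?_⟩, ⟨?_, ?_⟩, ?_, ⟨?_, ?_⟩, ?_⟩
  · rintro ⟨Φ, i⟩
    fin_cases i <;>
      simp [a00,a01,a02,a10,a11,a12,a20,a21,a22,Prod.ext_iff,hs0f,hs1f,hs2f,h02]
  · apply Equiv.ext; rintro ⟨Φ, i⟩
    fin_cases i <;>
      simp [a00,a01,a02,a10,a11,a12,a20,a21,a22,h0,h1,h2,hc,Equiv.Perm.mul_apply,pow_succ]
  · rintro ⟨Φ, i⟩
    fin_cases i <;>
      simp [a00,a01,a02,a10,a11,a12,a20,a21,a22,Prod.ext_iff,hs0f,hs1f,hs2f,h02]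
  · apply Equiv.ext; rintro ⟨Φ, i⟩
    fin_cases i <;>
      simp [a00,a01,a02,a10,a11,a12,a20,a21,a22,h0,h1,h2,hc,Equiv.Perm.mul_apply,pow_succ]
  · rintro ⟨Φ, i⟩
    fin_cases i <;>
      simp [a00,a01,a02,a20,a21,a22,Equiv.Perm.mul_apply,Prod.ext_iff,hs0f,hs1f,hs2f,h02]
  · apply Equiv.ext; rintro ⟨Φ, i⟩
    fin_cases i <;>
      simp [a00,a01,a02,a10,a11,a12,a20,a21,a22,h0,h1,h2,hc,Equiv.Perm.mul_apply,pow_succ]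
  · apply Equiv.ext; rintro ⟨Φ, i⟩
    fin_cases i <;>
      simp [a00,a01,a02,a10,a11,a12,a20,a21,a22,h0,h1,h2,hc,Equiv.Perm.mul_apply,pow_succ]
  · rintro ⟨Φ, i⟩
    fin_cases i <;>
      simp [a00,a01,a02,a20,a21,a22,Equiv.Perm.mul_apply,Prod.ext_iff,hs0f,hs1f,hs2f,h02]
  · apply Equiv.ext; rintro ⟨Φ, i⟩
    fin_cases i <;>
      simp [a00,a01,a02,a10,a11,a12,a20,a21,a22,h0,h1,h2,hc,Equiv.Perm.mul_apply,pow_succ]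
  · apply Equiv.ext; rintro ⟨Φ, i⟩
    fin_cases i <;>
      simp [a00,a01,a02,a10,a11,a12,a20,a21,a22,h0,h1,h2,hc,Equiv.Perm.mul_apply,pow_succ]
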